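/- arXiv:2412.03559 — 2 statements merged into one kernel-verified Lean document; each statement's English description precedes it below -/
import Mathlib

section
/- Let 0<q<1 be real, let g be a nonzero purely imaginary complex number, let b be a nonzero complex number and c = conj(b), and assume the parameters are such that no factor appearing in a denominator of h_n(g,b,c|q) vanishes. Then for every n ∈ ℤ the squared norm h_n(g,b,c|q) is a positive real number; explicitly, h_n = |(q, bq/conj(b);q)_∞ / (g²q/b, bq/g², bq, q/b;q)_∞|² · (g²q, q/g², g²q/|b|², |b|²q/g²;q)_∞ · ((1−|b|²/g²)/(1−|b|²q^{2n}/g²)) · q^n, where each factor in the second line is positive. -/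
open Complex

/-- The infinite `q`-shifted factorial `(a;q)_∞`. -/
noncomputable def qPochInf (a q : ℂ) : ℂ := ∏' j : ℕ, (1 - a * q ^ j)

lemma summable_log_qfac (a : ℂ) {q : ℝ} (hq0 : 0 < q) (hq1 : q < 1) :
    Summable (fun j : ℕ => Complex.log (1 - a * (q : ℂ) ^ j)) := by
  apply Summable.of_norm_bounded_eventually_nat (g := fun j => 3 / 2 * ‖a‖ * q ^ j)
  · exact ((summable_geometric_of_lt_one hq0.le hq1).mul_left _)
  · have h0 : Filter.Tendsto (fun j : ℕ => ‖a‖ * q ^ j) Filter.atTop (nhds 0) := by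
      simpa using (tendsto_pow_atTop_nhds_zero_of_lt_one hq0.le hq1).const_mul (‖a‖)
    filter_upwards [h0.eventually_le_const (by norm_num : (0:ℝ) < 1/2)] with j hj
    have h2 : ‖-(a * (q : ℂ) ^ j)‖ ≤ 1/2 := by
      rw [norm_neg]
      simpa [norm_mul, norm_pow, Complex.norm_real, Real.norm_eq_abs, abs_of_pos hq0] using hj
    have := Complex.norm_log_one_add_half_le_self h2
    rw [show (1 : ℂ) + -(a * (q:ℂ)^j) = 1 - a * (q:ℂ)^j by ring] at this
    refine this.trans ?_
    rw [norm_neg]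
    simp [norm_mul, norm_pow, Complex.norm_real, Real.norm_eq_abs, abs_of_pos hq0]
    ring_nf
    simp [mul_comm, mul_assoc, mul_left_comm, le_refl]

lemma tprod_eq_zero_of_factor {f : ℕ → ℂ} {j : ℕ} (h : f j = 0) : ∏' i, f i = 0 := by
  refine HasProd.tprod_eq ?_
  refine Filter.Tendsto.congr' ?_ tendsto_const_nhds
  filter_upwards [Filter.eventually_ge_atTop ({j} : Finset ℕ)] with s hs
  exact (Finset.prod_eq_zero (hs (Finset.mem_singleton_self j)) h).symm

lemma qPochInf_eq_exp (a : ℂ) {q : ℝ} (hq0 : 0 < q) (hq1 : q < 1)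
    (h : ∀ j : ℕ, 1 - a * (q : ℂ) ^ j ≠ 0) :
    qPochInf (a : ℂ) (q : ℂ) =
      Complex.exp (∑' j : ℕ, Complex.log (1 - a * (q : ℂ) ^ j)) := by
  have := Complex.cexp_tsum_eq_tprod (f := fun j => 1 - a * (q : ℂ) ^ j)
    h (summable_log_qfac a hq0 hq1)
  exact this.symm

lemma qPochInf_ne_zero (a : ℂ) {q : ℝ} (hq0 : 0 < q) (hq1 : q < 1)
    (h : ∀ j : ℕ, 1 - a * (q : ℂ) ^ j ≠ 0) : qPochInf (a : ℂ) (q : ℂ) ≠ 0 := by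
  rw [qPochInf_eq_exp a hq0 hq1 h]; exact Complex.exp_ne_zero _

lemma qPochInf_multipliable (a : ℂ) {q : ℝ} (hq0 : 0 < q) (hq1 : q < 1)
    (h : ∀ j : ℕ, 1 - a * (q : ℂ) ^ j ≠ 0) :
    Multipliable (fun j : ℕ => 1 - a * (q : ℂ) ^ j) :=
  Complex.multipliable_of_summable_log (summable_log_qfac a hq0 hq1)

lemma qPochInf_conj (a : ℂ) {q : ℝ} (hq0 : 0 < q) (hq1 : q < 1) :
    (starRingEnd ℂ) (qPochInf a (q : ℂ)) = qPochInf ((starRingEnd ℂ) a) (q : ℂ) := by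
  have key : ∀ j : ℕ, (starRingEnd ℂ) (1 - a * (q : ℂ) ^ j)
      = 1 - (starRingEnd ℂ) a * (q : ℂ) ^ j := by
    intro j; rw [map_sub, map_one, map_mul, map_pow, Complex.conj_ofReal]
  by_cases h : ∀ j : ℕ, 1 - a * (q : ℂ) ^ j ≠ 0
  · have hm := qPochInf_multipliable a hq0 hq1 h
    have := hm.map_tprod ((starRingEnd ℂ) : ℂ →+* ℂ).toMonoidHom continuous_conj
    rw [qPochInf, qPochInf]
    exact this.trans (tprod_congr fun j => key j)
  · push_neg at h
    obtain ⟨j, hj⟩ := h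
    rw [qPochInf, qPochInf, tprod_eq_zero_of_factor hj, map_zero]
    rw [eq_comm]
    apply tprod_eq_zero_of_factor (j := j)
    rw [← key j, hj, map_zero]

lemma summable_real_log_qfac {x q : ℝ} (hq0 : 0 < q) (hq1 : q < 1)
    (hx : ∀ j : ℕ, 0 < 1 - x * q ^ j) :
    Summable (fun j : ℕ => Real.log (1 - x * q ^ j)) := by
  have hc := summable_log_qfac (x : ℂ) hq0 hq1
  have := (Complex.reCLM : ℂ →L[ℝ] ℝ).summable hc
  refine this.congr fun j => ?_
  have : (1 : ℂ) - (x : ℂ) * (q : ℂ) ^ j = ((1 - x * q ^ j : ℝ) : ℂ) := by push_cast; ring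
  simp only [Complex.reCLM_apply, this, Complex.log_ofReal_re]

lemma qPochInf_real_pos {x q : ℝ} (hq0 : 0 < q) (hq1 : q < 1)
    (hx : ∀ j : ℕ, 0 < 1 - x * q ^ j) :
    ∃ r : ℝ, 0 < r ∧ qPochInf (x : ℂ) (q : ℂ) = (r : ℂ) := by
  set f : ℕ → ℝ := fun j => 1 - x * q ^ j with hf
  have hsum := summable_real_log_qfac hq0 hq1 hx
  have hprod := Real.rexp_tsum_eq_tprod (f := f) hx hsum
  have hpos : (0 : ℝ) < ∏' j : ℕ, f j := by
    rw [← hprod]; exact Real.exp_pos _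
  have hm : Multipliable f := Real.multipliable_of_summable_log hx hsum
  refine ⟨∏' j : ℕ, f j, hpos, ?_⟩
  have := hm.map_tprod (Complex.ofRealHom : ℝ →+* ℂ).toMonoidHom Complex.continuous_ofReal
  rw [qPochInf, eq_comm]
  exact this.trans (tprod_congr fun j => by simp [hf, Complex.ofRealHom_eq_coe])

/-- The squared norms `h_n(g,b,c|q)`. -/
noncomputable def hnorm (q : ℝ) (g b c : ℂ) (n : ℤ) : ℂ :=
  qPochInf (q : ℂ) (q : ℂ) * qPochInf (q : ℂ) (q : ℂ) * qPochInf (g ^ 2 * (q : ℂ)) (q : ℂ) *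
      qPochInf ((q : ℂ) / g ^ 2) (q : ℂ) * qPochInf (g ^ 2 * (q : ℂ) / (b * c)) (q : ℂ) *
      qPochInf (b * c * (q : ℂ) / g ^ 2) (q : ℂ) * qPochInf (c * (q : ℂ) / b) (q : ℂ) *
      qPochInf (b * (q : ℂ) / c) (q : ℂ) /
    (qPochInf (g ^ 2 * (q : ℂ) / b) (q : ℂ) * qPochInf (b * (q : ℂ) / g ^ 2) (q : ℂ) *
      qPochInf (g ^ 2 * (q : ℂ) / c) (q : ℂ) * qPochInf (c * (q : ℂ) / g ^ 2) (q : ℂ) *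
      qPochInf (b * (q : ℂ)) (q : ℂ) * qPochInf ((q : ℂ) / b) (q : ℂ) *
      qPochInf (c * (q : ℂ)) (q : ℂ) * qPochInf ((q : ℂ) / c) (q : ℂ)) *
  ((1 - b * c / g ^ 2) / (1 - b * c * (q : ℂ) ^ (2 * n) / g ^ 2)) * (q : ℂ) ^ n

/-- The absolute-value-squared factor appearing in the explicit representation of
`h_n`, as a complex number. -/
noncomputable def absFactor (q : ℝ) (g b : ℂ) : ℂ :=
  (((‖(qPochInf (q : ℂ) (q : ℂ) *
      qPochInf (b * (q : ℂ) / (starRingEnd ℂ) b) (q : ℂ) /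
    (qPochInf (g ^ 2 * (q : ℂ) / b) (q : ℂ) * qPochInf (b * (q : ℂ) / g ^ 2) (q : ℂ) *
      qPochInf (b * (q : ℂ)) (q : ℂ) * qPochInf ((q : ℂ) / b) (q : ℂ)))‖) ^ 2 : ℝ) : ℂ)

/-- The squared norms `h_n(g,b,c|q)` are positive real numbers, with the stated
explicit representation. -/
theorem squared_norm_positive (q : ℝ) (hq0 : 0 < q) (hq1 : q < 1)
    (g b c : ℂ) (hg : g ≠ 0) (hgre : g.re = 0) (hb : b ≠ 0) (hc : c = (starRingEnd ℂ) b)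
    (hd3 : qPochInf (g ^ 2 * (q : ℂ) / b) (q : ℂ) ≠ 0 ∧
      qPochInf (b * (q : ℂ) / g ^ 2) (q : ℂ) ≠ 0 ∧
      qPochInf (g ^ 2 * (q : ℂ) / c) (q : ℂ) ≠ 0 ∧
      qPochInf (c * (q : ℂ) / g ^ 2) (q : ℂ) ≠ 0 ∧
      qPochInf (b * (q : ℂ)) (q : ℂ) ≠ 0 ∧ qPochInf ((q : ℂ) / b) (q : ℂ) ≠ 0 ∧
      qPochInf (c * (q : ℂ)) (q : ℂ) ≠ 0 ∧ qPochInf ((q : ℂ) / c) (q : ℂ) ≠ 0)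
    (hd4 : ∀ m : ℤ, 1 - b * c * (q : ℂ) ^ (2 * m) / g ^ 2 ≠ 0) :
    ∀ n : ℤ,
      (hnorm q g b c n =
        absFactor q g b *
          (qPochInf (g ^ 2 * (q : ℂ)) (q : ℂ) * qPochInf ((q : ℂ) / g ^ 2) (q : ℂ) *
            qPochInf (g ^ 2 * (q : ℂ) / ((‖b‖ : ℂ) ^ 2)) (q : ℂ) *
            qPochInf ((‖b‖ : ℂ) ^ 2 * (q : ℂ) / g ^ 2) (q : ℂ)) *
          ((1 - (‖b‖ : ℂ) ^ 2 / g ^ 2) /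
            (1 - (‖b‖ : ℂ) ^ 2 * (q : ℂ) ^ (2 * n) / g ^ 2)) * (q : ℂ) ^ n) ∧
      ∃ t : ℝ, 0 < t ∧ hnorm q g b c n = (t : ℂ) := by
  intro n
  -- basic structural facts
  set y : ℝ := g.im with hy_def
  have hy : y ≠ 0 := by
    intro h
    exact hg (Complex.ext hgre h)
  have hy2 : (0 : ℝ) < y ^ 2 := by positivity
  have hgI : g = (y : ℂ) * I := by
    apply Complex.ext <;> simp [hgre, hy_def]
  have hg2 : g ^ 2 = ((-(y ^ 2) : ℝ) : ℂ) := by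
    rw [hgI, mul_pow, I_sq]; push_cast; ring
  set β : ℝ := ‖b‖ with hβ_def
  have hβ : 0 < β := norm_pos_iff.mpr hb
  have hgc : (starRingEnd ℂ) g = -g := by
    apply Complex.ext <;> simp [hgre]
  have hcc : (starRingEnd ℂ) c = b := by rw [hc, Complex.conj_conj]
  have hbc : b * c = (‖b‖ : ℂ) ^ 2 := by
    rw [hc, Complex.mul_conj, ← Complex.sq_norm, Complex.ofReal_pow]
  -- the conjugate of the bracketed quantity in `absFactor`
  have hA : (starRingEnd ℂ) (qPochInf (q : ℂ) (q : ℂ) *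
      qPochInf (b * (q : ℂ) / (starRingEnd ℂ) b) (q : ℂ) /
    (qPochInf (g ^ 2 * (q : ℂ) / b) (q : ℂ) * qPochInf (b * (q : ℂ) / g ^ 2) (q : ℂ) *
      qPochInf (b * (q : ℂ)) (q : ℂ) * qPochInf ((q : ℂ) / b) (q : ℂ))) =
      qPochInf (q : ℂ) (q : ℂ) * qPochInf (c * (q : ℂ) / b) (q : ℂ) /
    (qPochInf (g ^ 2 * (q : ℂ) / c) (q : ℂ) * qPochInf (c * (q : ℂ) / g ^ 2) (q : ℂ) *
      qPochInf (c * (q : ℂ)) (q : ℂ) * qPochInf ((q : ℂ) / c) (q : ℂ)) := by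
    simp only [map_div₀, map_mul, qPochInf_conj _ hq0 hq1, map_div₀, map_mul, map_pow,
      Complex.conj_ofReal, Complex.conj_conj, hgc, ← hc, hcc, neg_sq]
  have habs : absFactor q g b =
      (qPochInf (q : ℂ) (q : ℂ) * qPochInf (b * (q : ℂ) / (starRingEnd ℂ) b) (q : ℂ) /
        (qPochInf (g ^ 2 * (q : ℂ) / b) (q : ℂ) * qPochInf (b * (q : ℂ) / g ^ 2) (q : ℂ) *
          qPochInf (b * (q : ℂ)) (q : ℂ) * qPochInf ((q : ℂ) / b) (q : ℂ))) *
      (qPochInf (q : ℂ) (q : ℂ) * qPochInf (c * (q : ℂ) / b) (q : ℂ) /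
        (qPochInf (g ^ 2 * (q : ℂ) / c) (q : ℂ) * qPochInf (c * (q : ℂ) / g ^ 2) (q : ℂ) *
          qPochInf (c * (q : ℂ)) (q : ℂ) * qPochInf ((q : ℂ) / c) (q : ℂ))) := by
    rw [absFactor, Complex.sq_norm, ← Complex.mul_conj, hA]
  have hbqc : b * (q : ℂ) / (starRingEnd ℂ) b = b * (q : ℂ) / c := by rw [hc]
  have heq : hnorm q g b c n =
      absFactor q g b *
        (qPochInf (g ^ 2 * (q : ℂ)) (q : ℂ) * qPochInf ((q : ℂ) / g ^ 2) (q : ℂ) *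
          qPochInf (g ^ 2 * (q : ℂ) / ((‖b‖ : ℂ) ^ 2)) (q : ℂ) *
          qPochInf ((‖b‖ : ℂ) ^ 2 * (q : ℂ) / g ^ 2) (q : ℂ)) *
        ((1 - (‖b‖ : ℂ) ^ 2 / g ^ 2) /
          (1 - (‖b‖ : ℂ) ^ 2 * (q : ℂ) ^ (2 * n) / g ^ 2)) * (q : ℂ) ^ n := by
    rw [habs, hbqc, hnorm, hbc]
    ring
  refine ⟨heq, ?_⟩
  -- positivity
  -- the four purely real Pochhammer factors
  have hneg : ∀ x : ℝ, x < 0 → ∀ j : ℕ, 0 < 1 - x * q ^ j := by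
    intro x hx j
    have : x * q ^ j < 0 := mul_neg_of_neg_of_pos hx (pow_pos hq0 j)
    linarith
  obtain ⟨r1, hr1, hr1eq⟩ : ∃ r : ℝ, 0 < r ∧ qPochInf (g ^ 2 * (q : ℂ)) (q : ℂ) = (r : ℂ) := by
    obtain ⟨r, hr, hre⟩ := qPochInf_real_pos (x := -(y ^ 2) * q) hq0 hq1
      (hneg _ (by nlinarith))
    exact ⟨r, hr, by rw [hg2, show ((-(y^2):ℝ):ℂ) * (q:ℂ) = ((-(y^2) * q : ℝ) : ℂ) by
      push_cast; ring, hre]⟩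
  obtain ⟨r2, hr2, hr2eq⟩ : ∃ r : ℝ, 0 < r ∧ qPochInf ((q : ℂ) / g ^ 2) (q : ℂ) = (r : ℂ) := by
    obtain ⟨r, hr, hre⟩ := qPochInf_real_pos (x := q / (-(y ^ 2))) hq0 hq1
      (hneg _ (div_neg_of_pos_of_neg hq0 (by nlinarith)))
    exact ⟨r, hr, by rw [hg2, show (q:ℂ) / ((-(y^2):ℝ):ℂ) = ((q / (-(y^2)) : ℝ) : ℂ) by
      push_cast; ring, hre]⟩
  obtain ⟨r3, hr3, hr3eq⟩ : ∃ r : ℝ, 0 < r ∧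
      qPochInf (g ^ 2 * (q : ℂ) / ((‖b‖ : ℂ) ^ 2)) (q : ℂ) = (r : ℂ) := by
    obtain ⟨r, hr, hre⟩ := qPochInf_real_pos (x := -(y ^ 2) * q / β ^ 2) hq0 hq1
      (hneg _ (div_neg_of_neg_of_pos (by nlinarith) (by positivity)))
    exact ⟨r, hr, by rw [hg2, show ((-(y^2):ℝ):ℂ) * (q:ℂ) / ((‖b‖ : ℂ) ^ 2)
      = ((-(y^2) * q / β ^ 2 : ℝ) : ℂ) by push_cast [hβ_def]; ring, hre]⟩
  obtain ⟨r4, hr4, hr4eq⟩ : ∃ r : ℝ, 0 < r ∧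
      qPochInf ((‖b‖ : ℂ) ^ 2 * (q : ℂ) / g ^ 2) (q : ℂ) = (r : ℂ) := by
    obtain ⟨r, hr, hre⟩ := qPochInf_real_pos (x := β ^ 2 * q / (-(y ^ 2))) hq0 hq1
      (hneg _ (div_neg_of_pos_of_neg (by positivity) (by nlinarith)))
    exact ⟨r, hr, by rw [hg2, show ((‖b‖ : ℂ) ^ 2) * (q:ℂ) / ((-(y^2):ℝ):ℂ)
      = ((β ^ 2 * q / (-(y^2)) : ℝ) : ℂ) by push_cast [hβ_def]; ring, hre]⟩
  -- the absFactor is a positive real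
  have hn1 : qPochInf (q : ℂ) (q : ℂ) ≠ 0 := by
    obtain ⟨r, hr, hre⟩ := qPochInf_real_pos (x := q) hq0 hq1 (fun j => by
      have h1 : q * q ^ j < 1 := by
        calc q * q ^ j ≤ q * 1 := by
              exact mul_le_mul_of_nonneg_left (pow_le_one₀ hq0.le hq1.le) hq0.le
          _ < 1 := by linarith
      linarith)
    rw [hre]
    exact_mod_cast hr.ne'
  have hn2 : qPochInf (b * (q : ℂ) / (starRingEnd ℂ) b) (q : ℂ) ≠ 0 := by
    apply qPochInf_ne_zero _ hq0 hq1
    intro j h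
    have h1 : b * (q : ℂ) / (starRingEnd ℂ) b * (q : ℂ) ^ j = 1 := by
      have := sub_eq_zero.mp h; exact this.symm
    have h2 := congrArg norm h1
    rw [norm_mul, norm_div, norm_mul, Complex.norm_conj, Complex.norm_real, norm_pow,
      Complex.norm_real, norm_one, Real.norm_eq_abs, abs_of_pos hq0] at h2
    rw [mul_comm (‖b‖) q, mul_div_assoc, div_self (norm_ne_zero_iff.mpr hb),
      mul_one] at h2
    have h3 : q * q ^ j < 1 := by
      calc q * q ^ j ≤ q * 1 := mul_le_mul_of_nonneg_left (pow_le_one₀ hq0.le hq1.le) hq0.le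
        _ < 1 := by linarith
    linarith [h2, h3]
  obtain ⟨d1, d2, d3, d4, d5, d6, d7, d8⟩ := hd3
  set A : ℂ := qPochInf (q : ℂ) (q : ℂ) *
      qPochInf (b * (q : ℂ) / (starRingEnd ℂ) b) (q : ℂ) /
    (qPochInf (g ^ 2 * (q : ℂ) / b) (q : ℂ) * qPochInf (b * (q : ℂ) / g ^ 2) (q : ℂ) *
      qPochInf (b * (q : ℂ)) (q : ℂ) * qPochInf ((q : ℂ) / b) (q : ℂ)) with hAdef
  have hAne : A ≠ 0 := by
    apply div_ne_zero (mul_ne_zero hn1 hn2)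
    exact mul_ne_zero (mul_ne_zero (mul_ne_zero d1 d2) d5) d6
  have hAbsF : absFactor q g b = ((‖A‖ ^ 2 : ℝ) : ℂ) := rfl
  have haA : 0 < ‖A‖ ^ 2 := by
    have := norm_pos_iff.mpr hAne
    positivity
  have hrat : (1 - (‖b‖ : ℂ) ^ 2 / g ^ 2) /
      (1 - (‖b‖ : ℂ) ^ 2 * (q : ℂ) ^ (2 * n) / g ^ 2) =
      (((1 - β ^ 2 / (-(y ^ 2))) / (1 - β ^ 2 * q ^ (2 * n) / (-(y ^ 2)))) : ℝ) := by
    rw [hg2]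
    push_cast [Complex.ofReal_zpow, hβ_def]
    ring
  have hρnum : 0 < 1 - β ^ 2 / (-(y ^ 2)) := by
    have : β ^ 2 / (-(y ^ 2)) < 0 := div_neg_of_pos_of_neg (by positivity) (by nlinarith)
    linarith
  have hρden : 0 < 1 - β ^ 2 * q ^ (2 * n) / (-(y ^ 2)) := by
    have hz : (0 : ℝ) < q ^ (2 * n) := zpow_pos hq0 _
    have : β ^ 2 * q ^ (2 * n) / (-(y ^ 2)) < 0 :=
      div_neg_of_pos_of_neg (by positivity) (by nlinarith)
    linarith
  have hρ : 0 < (1 - β ^ 2 / (-(y ^ 2))) / (1 - β ^ 2 * q ^ (2 * n) / (-(y ^ 2))) :=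
    div_pos hρnum hρden
  have hqn : (0 : ℝ) < q ^ n := zpow_pos hq0 _
  refine ⟨‖A‖ ^ 2 * (r1 * r2 * r3 * r4) *
    ((1 - β ^ 2 / (-(y ^ 2))) / (1 - β ^ 2 * q ^ (2 * n) / (-(y ^ 2)))) * q ^ n, ?_, ?_⟩
  · have h12 : 0 < r1 * r2 * r3 * r4 := by positivity
    exact mul_pos (mul_pos (mul_pos haA h12) hρ) hqn
  · rw [heq, hAbsF, hr1eq, hr2eq, hr3eq, hr4eq, hrat,
      show (q : ℂ) ^ n = ((q ^ n : ℝ) : ℂ) from (Complex.ofReal_zpow q n).symm]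
    push_cast
    ring
end

section
/- Let 0<q<1 be real, let g be a nonzero purely imaginary complex number, let b be a nonzero complex number and c = conj(b), and assume the parameters are such that no factor appearing in a denominator vanishes. Then for every n ∈ ℤ and every z on the unit circle, F_n(z;g,b,c|q) has the representation F_n(z;g,b,c|q) = ((b, b/g²;q)_n/(cq, cq/g²;q)_n) · (cq/b)^n · ₃ψ₃[gq, bq^n, g²q^{−n}/c ; g, g²q^{1−n}/b, cq^{1+n} ; q, q^{1/2} z], where the bilateral series on the right converges absolutely on |z|=1. -/
open Complex

/-- The `q`-shifted factorial `(a;q)_k` for integer `k`, given by the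
(generically equal) product formulas. -/
noncomputable def qPoch (a q : ℂ) (k : ℤ) : ℂ :=
  if 0 ≤ k then ∏ j ∈ Finset.range k.toNat, (1 - a * q ^ j)
  else (∏ j ∈ Finset.range (-k).toNat, (1 - a * q ^ (-(j : ℤ) - 1)))⁻¹

/-- The coefficients `F_{n,k}(g,b,c|q)`. -/
noncomputable def Fnk (q : ℝ) (g b c : ℂ) (n k : ℤ) : ℂ :=
  (1 - g * (q : ℂ) ^ k) / (1 - g) *
    (qPoch b (q : ℂ) (n + k) * qPoch (g ^ 2 / c) (q : ℂ) (k - n) /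
      (qPoch (c * (q : ℂ)) (q : ℂ) (n + k) * qPoch (g ^ 2 * (q : ℂ) / b) (q : ℂ) (k - n))) *
    ((Real.sqrt q : ℂ)) ^ k

/-- The function `F_n(z; g,b,c|q) = Σ_{k∈ℤ} F_{n,k}(g,b,c|q) z^k`. -/
noncomputable def Fq (q : ℝ) (g b c : ℂ) (n : ℤ) (z : ℂ) : ℂ :=
  ∑' k : ℤ, Fnk q g b c n k * z ^ k

/-- The summand of the well-poised bilateral basic hypergeometric `₃ψ₃` series
`₃ψ₃[gq, bqⁿ, g²q⁻ⁿ/c; g, g²q^{1−n}/b, cq^{1+n}; q, q^{1/2} z]`. -/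
noncomputable def psi3Term (q : ℝ) (g b c : ℂ) (n k : ℤ) (z : ℂ) : ℂ :=
  qPoch (g * (q : ℂ)) (q : ℂ) k * qPoch (b * (q : ℂ) ^ n) (q : ℂ) k *
      qPoch (g ^ 2 * (q : ℂ) ^ (-n) / c) (q : ℂ) k /
    (qPoch g (q : ℂ) k * qPoch (g ^ 2 * (q : ℂ) ^ (1 - n) / b) (q : ℂ) k *
      qPoch (c * (q : ℂ) ^ (1 + n)) (q : ℂ) k) *
    ((Real.sqrt q : ℂ) * z) ^ k

section Aux
open Filter Topology

lemma qPoch_zero (a q : ℂ) : qPoch a q 0 = 1 := by simp [qPoch]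

lemma qPoch_one (a q : ℂ) : qPoch a q 1 = 1 - a := by simp [qPoch]

lemma qPoch_succ (a q : ℂ) (k : ℤ) (hk : 1 - a * q ^ k ≠ 0) :
    qPoch a q (k + 1) = qPoch a q k * (1 - a * q ^ k) := by
  rcases le_or_gt 0 k with h | h
  · rw [qPoch, qPoch, if_pos h, if_pos (by omega)]
    have : (k + 1).toNat = k.toNat + 1 := by omega
    rw [this, Finset.prod_range_succ]
    congr 2
    rw [← zpow_natCast, Int.toNat_of_nonneg h]
  · rcases eq_or_lt_of_le (by omega : k + 1 ≤ 0) with h1 | h1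
    · have hk1 : k = -1 := by omega
      subst hk1
      rw [qPoch, qPoch, if_pos (by norm_num), if_neg (by norm_num)]
      simp only [show ((-(-1:ℤ)).toNat) = 1 by rfl]
      rw [Finset.prod_range_one]
      simp only [Nat.cast_zero, neg_zero, zero_sub]
      rw [inv_mul_cancel₀]
      · simp
      · simpa using hk
    · rw [qPoch, qPoch, if_neg (by omega), if_neg (by omega)]
      have h2 : (-k).toNat = (-(k+1)).toNat + 1 := by omega
      rw [h2, Finset.prod_range_succ]
      have h3 : (-((-(k+1)).toNat : ℤ) - 1) = k := by omega
      rw [h3, mul_inv, inv_mul_cancel_right₀ hk]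

lemma qPoch_ne_zero {a q : ℂ} (ha : ∀ j : ℤ, 1 - a * q ^ j ≠ 0) (k : ℤ) :
    qPoch a q k ≠ 0 := by
  rw [qPoch]
  split
  · exact Finset.prod_ne_zero_iff.2 fun j _ => by
      simpa [zpow_natCast] using ha j
  · exact inv_ne_zero (Finset.prod_ne_zero_iff.2 fun j _ => ha (-(j:ℤ) - 1))

lemma factor_ne_zero {a q : ℂ} (h : ∀ m : ℤ, qPoch a q m ≠ 0) :
    ∀ j : ℤ, 1 - a * q ^ j ≠ 0 := by
  intro j hj
  rcases le_or_gt 0 j with hj0 | hj0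
  · refine h (j + 1) ?_
    rw [qPoch, if_pos (by omega)]
    refine Finset.prod_eq_zero (i := j.toNat) (by simp; omega) ?_
    rwa [← zpow_natCast, Int.toNat_of_nonneg hj0]
  · refine h j ?_
    rw [qPoch, if_neg (by omega)]
    refine inv_eq_zero.2 (Finset.prod_eq_zero (i := (-j-1).toNat) (by simp; omega) ?_)
    have : (-((-j-1).toNat : ℤ) - 1) = j := by omega
    rwa [this]

lemma qPoch_add {a q : ℂ} (hq : q ≠ 0) (ha : ∀ j : ℤ, 1 - a * q ^ j ≠ 0) (m l : ℤ) :
    qPoch a q (m + l) = qPoch a q m * qPoch (a * q ^ m) q l := by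
  have ha' : ∀ (m j : ℤ), 1 - a * q ^ m * q ^ j ≠ 0 := fun m j => by
    rw [mul_assoc, ← zpow_add₀ hq]; exact ha _
  induction l using Int.induction_on with
  | zero => simp [qPoch_zero]
  | succ l ih =>
      have e1 : (m : ℤ) + ((l:ℤ) + 1) = (m + l) + 1 := by ring
      rw [e1, qPoch_succ _ _ _ (ha _), ih, qPoch_succ _ _ _ (ha' m l)]
      rw [zpow_add₀ hq]; ring
  | pred l ih =>
      have e1 : (m : ℤ) + (-(l:ℤ) - 1) + 1 = m + -l := by ring
      have e2 : (-(l:ℤ) - 1) + 1 = -l := by ring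
      have s1 := qPoch_succ a q (m + (-(l:ℤ) - 1)) (ha _)
      rw [e1] at s1
      have s2 := qPoch_succ (a * q ^ m) q (-(l:ℤ) - 1) (ha' m _)
      rw [e2] at s2
      have hYY : a * q ^ m * q ^ (-(l:ℤ)-1) = a * q ^ (m + (-(l:ℤ)-1)) := by
        rw [mul_assoc, ← zpow_add₀ hq]
      rw [s1, s2, hYY] at ih
      exact mul_right_cancel₀ (ha _) (by rw [ih]; ring)

lemma fam_param {x Q : ℂ} (hQ : Q ≠ 0) (h : ∀ j : ℤ, 1 - x * Q ^ j ≠ 0) {y : ℂ} (m : ℤ)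
    (hy : y = x * Q ^ m) : ∀ j : ℤ, 1 - y * Q ^ j ≠ 0 := fun j => by
  rw [hy, mul_assoc, ← zpow_add₀ hQ]; exact h _

/-- decomposition `(a;q)_{m+l} = (a;q)_m (aq^m;q)_l` with explicit shifted parameter. -/
lemma qPoch_add' {a Q : ℂ} (hQ : Q ≠ 0) (ha : ∀ j : ℤ, 1 - a * Q ^ j ≠ 0) (m l : ℤ)
    {y : ℂ} (hy : y = a * Q ^ m) :
    qPoch a Q (m + l) = qPoch a Q m * qPoch y Q l := by
  rw [hy]; exact qPoch_add hQ ha m l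

lemma Kid {Q g b c : ℂ} (hQ : Q ≠ 0) (hg2 : g ^ 2 ≠ 0) (hb : b ≠ 0) (hc : c ≠ 0)
    (hbg : ∀ j : ℤ, 1 - b / g ^ 2 * Q ^ j ≠ 0)
    (hcg : ∀ j : ℤ, 1 - c * Q / g ^ 2 * Q ^ j ≠ 0)
    (hgc : ∀ j : ℤ, 1 - g ^ 2 / c * Q ^ j ≠ 0)
    (hgb : ∀ j : ℤ, 1 - g ^ 2 / b * Q ^ j ≠ 0) (n : ℤ) :
    qPoch (b / g ^ 2) Q n * (c * Q / b) ^ n * qPoch (g ^ 2 * Q ^ (-n) / c) Q n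
      = qPoch (c * Q / g ^ 2) Q n * qPoch (g ^ 2 * Q ^ (1 - n) / b) Q n := by
  have ht : c * Q / b ≠ 0 := by
    apply div_ne_zero (mul_ne_zero hc hQ) hb
  have step : ∀ m : ℤ,
      (qPoch (b / g ^ 2) Q (m+1) * (c * Q / b) ^ (m+1) * qPoch (g ^ 2 * Q ^ (-(m+1)) / c) Q (m+1)
        = qPoch (b / g ^ 2) Q m * (c * Q / b) ^ m * qPoch (g ^ 2 * Q ^ (-m) / c) Q m
            * ((1 - c * Q / g ^ 2 * Q ^ m) * (1 - g ^ 2 * Q ^ (-m) / b)))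
      ∧ (qPoch (c * Q / g ^ 2) Q (m+1) * qPoch (g ^ 2 * Q ^ (1 - (m+1)) / b) Q (m+1)
        = qPoch (c * Q / g ^ 2) Q m * qPoch (g ^ 2 * Q ^ (1 - m) / b) Q m
            * ((1 - c * Q / g ^ 2 * Q ^ m) * (1 - g ^ 2 * Q ^ (-m) / b))) := by
    intro m
    have hA := qPoch_succ (b / g ^ 2) Q m (hbg m)
    have hC := qPoch_succ (c * Q / g ^ 2) Q m (hcg m)
    have eB : g ^ 2 * Q ^ (-(m+1)) / c * Q = g ^ 2 * Q ^ (-m) / c := by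
      rw [show (-m : ℤ) = -(m+1) + 1 by ring, zpow_add₀ hQ, zpow_one]; ring
    have eD : g ^ 2 * Q ^ (-m) / b * Q = g ^ 2 * Q ^ (1 - m) / b := by
      rw [show (1 - m : ℤ) = -m + 1 by ring, zpow_add₀ hQ, zpow_one]; ring
    have famB : ∀ j : ℤ, 1 - g ^ 2 * Q ^ (-(m+1)) / c * Q ^ j ≠ 0 :=
      fam_param hQ hgc (-(m+1)) (by ring)
    have famD : ∀ j : ℤ, 1 - g ^ 2 * Q ^ (-m) / b * Q ^ j ≠ 0 :=
      fam_param hQ hgb (-m) (by ring)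
    have hB := qPoch_add' hQ famB 1 m (y := g ^ 2 * Q ^ (-m) / c)
      (by rw [zpow_one, eB])
    have hD := qPoch_add' hQ famD 1 m (y := g ^ 2 * Q ^ (1 - m) / b)
      (by rw [zpow_one, eD])
    rw [add_comm (1:ℤ) m] at hB hD
    rw [qPoch_one] at hB hD
    have key : (1 - b / g ^ 2 * Q ^ m) * (c * Q / b) * (1 - g ^ 2 * Q ^ (-(m+1)) / c)
        = (1 - c * Q / g ^ 2 * Q ^ m) * (1 - g ^ 2 * Q ^ (-m) / b) := by
      have h1 : Q ^ (-(m+1) : ℤ) = (Q ^ m * Q)⁻¹ := by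
        rw [zpow_neg, zpow_add_one₀ hQ]
      have h2 : Q ^ (-m : ℤ) = (Q ^ m)⁻¹ := zpow_neg Q m
      have hu : Q ^ (m : ℤ) ≠ 0 := zpow_ne_zero _ hQ
      rw [h1, h2]
      have hg' : g ≠ 0 := fun h => hg2 (by simp [h])
      field_simp
      ring
    constructor
    · rw [hA, hB, zpow_add_one₀ ht]
      linear_combination (qPoch (b / g ^ 2) Q m * (c * Q / b) ^ m
        * qPoch (g ^ 2 * Q ^ (-m) / c) Q m) * key
    · rw [hC, show (1:ℤ)-(m+1) = -m by ring, hD]; ring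
  have nz : ∀ m : ℤ, (1 - c * Q / g ^ 2 * Q ^ m) * (1 - g ^ 2 * Q ^ (-m) / b) ≠ 0 := by
    intro m
    refine mul_ne_zero (hcg m) ?_
    have := fam_param hQ hgb (-m) (show g ^ 2 * Q ^ (-m) / b = g ^ 2 / b * Q ^ (-m) by ring) 0
    simpa using this
  induction n using Int.induction_on with
  | zero => simp [qPoch_zero]
  | succ m ih =>
      have h1 := (step (m:ℤ)).1
      have h2 := (step (m:ℤ)).2
      linear_combination h1 - h2 + ((1 - c * Q / g ^ 2 * Q ^ (m:ℤ)) * (1 - g ^ 2 * Q ^ (-(m:ℤ)) / b)) * ih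
  | pred m ih =>
      have h1 := (step (-(m:ℤ)-1)).1
      have h2 := (step (-(m:ℤ)-1)).2
      rw [show (-(m:ℤ)-1)+1 = -(m:ℤ) by ring] at h1 h2
      apply mul_right_cancel₀ (nz (-(m:ℤ)-1))
      linear_combination ih - h1 + h2

lemma alg (u v Bn BNk Bk Btn Gk Dk CNk CQn Cn An t sk zk : ℂ)
    (hu : u ≠ 0) (hBtn : Btn ≠ 0) (hGk : Gk ≠ 0) (hDk : Dk ≠ 0) (hCNk : CNk ≠ 0)
    (hCQn : CQn ≠ 0) (hCn : Cn ≠ 0) (hAn : An ≠ 0) (ht : t ≠ 0) :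
    v / u * (Bn * BNk * (Btn⁻¹ * Bk) / (CQn * CNk * ((An * t * Btn / Cn)⁻¹ * Dk))) * sk * zk
      = Bn * An / (CQn * Cn) * t * (Gk * v / u * BNk * Bk / (Gk * Dk * CNk) * (sk * zk)) := by
  field_simp

set_option maxHeartbeats 1000000 in
lemma termwise (q : ℝ) (g b c z : ℂ) (hQ : (q:ℂ) ≠ 0) (hs : ((Real.sqrt q : ℝ) : ℂ) ≠ 0)
    (hg : g ≠ 0) (h1g : 1 - g ≠ 0) (hb : b ≠ 0) (hc : c ≠ 0) (hz : z ≠ 0)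
    (hgf : ∀ j : ℤ, 1 - g * (q:ℂ) ^ j ≠ 0)
    (hbf : ∀ j : ℤ, 1 - b * (q:ℂ) ^ j ≠ 0)
    (hcf : ∀ j : ℤ, 1 - c * (q:ℂ) ^ j ≠ 0)
    (hgcf : ∀ j : ℤ, 1 - g ^ 2 / c * (q:ℂ) ^ j ≠ 0)
    (hgbf : ∀ j : ℤ, 1 - g ^ 2 / b * (q:ℂ) ^ j ≠ 0)
    (hbgf : ∀ j : ℤ, 1 - b / g ^ 2 * (q:ℂ) ^ j ≠ 0)
    (hcgQf : ∀ j : ℤ, 1 - c * (q:ℂ) / g ^ 2 * (q:ℂ) ^ j ≠ 0)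
    (n k : ℤ) :
    Fnk q g b c n k * z ^ k =
      qPoch b (q : ℂ) n * qPoch (b / g ^ 2) (q : ℂ) n /
          (qPoch (c * (q : ℂ)) (q : ℂ) n * qPoch (c * (q : ℂ) / g ^ 2) (q : ℂ) n) *
        (c * (q : ℂ) / b) ^ n * psi3Term q g b c n k z := by
  set Q : ℂ := (q:ℂ) with hQdef
  have hcQf : ∀ j : ℤ, 1 - c * Q * Q ^ j ≠ 0 :=
    fam_param hQ hcf 1 (by rw [zpow_one])
  have hgbQf : ∀ j : ℤ, 1 - g ^ 2 * Q / b * Q ^ j ≠ 0 :=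
    fam_param hQ hgbf 1 (by rw [zpow_one]; ring)
  have hy3 : c * Q ^ (1 + n) = (c * Q) * Q ^ n := by
    rw [zpow_add₀ hQ, zpow_one]; ring
  have hy4 : g ^ 2 * Q ^ (1 - n) / b = (g ^ 2 * Q / b) * Q ^ (-n) := by
    rw [show (1:ℤ) - n = 1 + -n by ring, zpow_add₀ hQ, zpow_one]; ring
  have hy2 : g ^ 2 * Q ^ (-n) / c = (g ^ 2 / c) * Q ^ (-n) := by ring
  have r1 := qPoch_add' hQ hbf n k (y := b * Q ^ n) rfl
  have r2 := qPoch_add' hQ hgcf (-n) k (y := g ^ 2 * Q ^ (-n) / c) hy2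
  have r3 := qPoch_add' hQ hcQf n k (y := c * Q ^ (1 + n)) hy3
  have r4 := qPoch_add' hQ hgbQf (-n) k (y := g ^ 2 * Q ^ (1 - n) / b) hy4
  -- (gq;q)_k = (g;q)_k (1-gq^k)/(1-g)
  have r5 : qPoch (g * Q) Q k = qPoch g Q k * (1 - g * Q ^ k) / (1 - g) := by
    have e1 := qPoch_add' hQ hgf 1 k (y := g * Q) (by rw [zpow_one])
    have e2 := qPoch_succ g Q k (hgf k)
    rw [add_comm, qPoch_one] at e1
    rw [eq_div_iff h1g]
    linear_combination e2 - e1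
  have famB : ∀ j : ℤ, 1 - g ^ 2 * Q ^ (-n) / c * Q ^ j ≠ 0 := fam_param hQ hgcf (-n) hy2
  have famD : ∀ j : ℤ, 1 - g ^ 2 * Q ^ (1 - n) / b * Q ^ j ≠ 0 := fam_param hQ hgbQf (-n) hy4
  have famCQN : ∀ j : ℤ, 1 - c * Q ^ (1 + n) * Q ^ j ≠ 0 := fam_param hQ hcQf n hy3
  have hBn : qPoch (g ^ 2 * Q ^ (-n) / c) Q n ≠ 0 := qPoch_ne_zero famB n
  have hDn : qPoch (g ^ 2 * Q ^ (1 - n) / b) Q n ≠ 0 := qPoch_ne_zero famD n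
  have hAn : qPoch (b / g ^ 2) Q n ≠ 0 := qPoch_ne_zero hbgf n
  have hCn : qPoch (c * Q / g ^ 2) Q n ≠ 0 := qPoch_ne_zero hcgQf n
  have hGk : qPoch g Q k ≠ 0 := qPoch_ne_zero hgf k
  have hDk : qPoch (g ^ 2 * Q ^ (1 - n) / b) Q k ≠ 0 := qPoch_ne_zero famD k
  have hCQNk : qPoch (c * Q ^ (1 + n)) Q k ≠ 0 := qPoch_ne_zero famCQN k
  have hCQn : qPoch (c * Q) Q n ≠ 0 := qPoch_ne_zero hcQf n
  have htn : (c * Q / b) ^ n ≠ 0 := zpow_ne_zero _ (div_ne_zero (mul_ne_zero hc hQ) hb)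
  have hzk : z ^ k ≠ 0 := zpow_ne_zero _ hz
  have hsk : ((Real.sqrt q : ℝ):ℂ) ^ k ≠ 0 := zpow_ne_zero _ hs
  -- inversion relations
  have r6 : qPoch (g ^ 2 / c) Q (-n) = (qPoch (g ^ 2 * Q ^ (-n) / c) Q n)⁻¹ := by
    have e := qPoch_add' hQ hgcf (-n) n (y := g ^ 2 * Q ^ (-n) / c) hy2
    rw [show -n + n = (0:ℤ) by ring, qPoch_zero] at e
    exact eq_inv_of_mul_eq_one_left e.symm
  have r7 : qPoch (g ^ 2 * Q / b) Q (-n) = (qPoch (g ^ 2 * Q ^ (1 - n) / b) Q n)⁻¹ := by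
    have e := qPoch_add' hQ hgbQf (-n) n (y := g ^ 2 * Q ^ (1 - n) / b) hy4
    rw [show -n + n = (0:ℤ) by ring, qPoch_zero] at e
    exact eq_inv_of_mul_eq_one_left e.symm
  have K := Kid hQ (pow_ne_zero 2 hg) hb hc hbgf hcgQf hgcf hgbf n
  have hX : qPoch (g ^ 2 * Q ^ (1 - n) / b) Q n =
      qPoch (b / g ^ 2) Q n * (c * Q / b) ^ n * qPoch (g ^ 2 * Q ^ (-n) / c) Q n /
        qPoch (c * Q / g ^ 2) Q n := by
    rw [eq_div_iff hCn]; linear_combination -K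
  rw [Fnk, psi3Term, show k - n = -n + k from sub_eq_neg_add k n,
    r1, r2, r3, r4, r5, r6, r7, hX, mul_zpow]
  exact alg _ _ _ _ _ _ _ _ _ _ _ _ _ _ _ h1g hBn hGk hDk hCQNk hCQn hCn hAn htn

set_option maxHeartbeats 2000000 in
lemma summ (q : ℝ) (hq0 : 0 < q) (hq1 : q < 1) (g b c z : ℂ)
    (hg : g ≠ 0) (hb : b ≠ 0) (hc : c ≠ 0)
    (hgf : ∀ j : ℤ, 1 - g * (q:ℂ) ^ j ≠ 0)
    (hbf : ∀ j : ℤ, 1 - b * (q:ℂ) ^ j ≠ 0)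
    (hcf : ∀ j : ℤ, 1 - c * (q:ℂ) ^ j ≠ 0)
    (hgcf : ∀ j : ℤ, 1 - g ^ 2 / c * (q:ℂ) ^ j ≠ 0)
    (hgbf : ∀ j : ℤ, 1 - g ^ 2 / b * (q:ℂ) ^ j ≠ 0)
    (hzn : ‖z‖ = 1)
    (hcb : ‖c‖ = ‖b‖) (n : ℤ) :
    Summable fun k : ℤ => ‖psi3Term q g b c n k z‖ := by
  set Q : ℂ := (q:ℂ) with hQdef
  have hQ : Q ≠ 0 := by
    simp only [hQdef, ne_eq, Complex.ofReal_eq_zero]; exact ne_of_gt hq0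
  set s : ℂ := ((Real.sqrt q : ℝ) : ℂ) with hsdef
  have hsq0 : (0:ℝ) < Real.sqrt q := Real.sqrt_pos.2 hq0
  have hs : s ≠ 0 := by
    simp only [hsdef, ne_eq, Complex.ofReal_eq_zero]; exact ne_of_gt hsq0
  have hz : z ≠ 0 := by
    intro h0; rw [h0] at hzn; simp at hzn
  have hw : s * z ≠ 0 := mul_ne_zero hs hz
  have hnw : ‖s * z‖ = Real.sqrt q := by
    rw [norm_mul, hsdef, Complex.norm_real, Real.norm_eq_abs,
      abs_of_pos hsq0] at *
    rw [hzn, mul_one]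
  have hsqlt : Real.sqrt q < 1 := by
    rw [show (1:ℝ) = Real.sqrt 1 by simp]
    exact Real.sqrt_lt_sqrt (le_of_lt hq0) hq1
  -- factor families for the six parameters
  have famN1 : ∀ j : ℤ, 1 - g * Q * Q ^ j ≠ 0 := fam_param hQ hgf 1 (by rw [zpow_one])
  have famN2 : ∀ j : ℤ, 1 - b * Q ^ n * Q ^ j ≠ 0 := fam_param hQ hbf n rfl
  have famN3 : ∀ j : ℤ, 1 - g ^ 2 * Q ^ (-n) / c * Q ^ j ≠ 0 :=
    fam_param hQ hgcf (-n) (by ring)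
  have famD1 : ∀ j : ℤ, 1 - g * Q ^ j ≠ 0 := hgf
  have famD2 : ∀ j : ℤ, 1 - g ^ 2 * Q ^ (1 - n) / b * Q ^ j ≠ 0 :=
    fam_param hQ hgbf (1 - n) (by ring)
  have famD3 : ∀ j : ℤ, 1 - c * Q ^ (1 + n) * Q ^ j ≠ 0 :=
    fam_param hQ hcf (1 + n) (by ring)
  set T : ℤ → ℂ := fun k => psi3Term q g b c n k z with hTdef
  have hT0 : ∀ k : ℤ, T k ≠ 0 := by
    intro k
    refine mul_ne_zero (div_ne_zero ?_ ?_) (zpow_ne_zero _ hw)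
    · exact mul_ne_zero (mul_ne_zero (qPoch_ne_zero famN1 k) (qPoch_ne_zero famN2 k))
        (qPoch_ne_zero famN3 k)
    · exact mul_ne_zero (mul_ne_zero (qPoch_ne_zero famD1 k) (qPoch_ne_zero famD2 k))
        (qPoch_ne_zero famD3 k)
  set Rat : ℤ → ℂ := fun k =>
    (1 - g * Q * Q ^ k) * (1 - b * Q ^ n * Q ^ k) * (1 - g ^ 2 * Q ^ (-n) / c * Q ^ k) /
      ((1 - g * Q ^ k) * (1 - g ^ 2 * Q ^ (1 - n) / b * Q ^ k) *
        (1 - c * Q ^ (1 + n) * Q ^ k)) with hRatdef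
  have hTsucc : ∀ k : ℤ, T (k + 1) = T k * (Rat k * (s * z)) := by
    intro k
    show psi3Term q g b c n (k+1) z = psi3Term q g b c n k z * (Rat k * (s * z))
    rw [psi3Term, psi3Term, qPoch_succ _ _ _ (famN1 k), qPoch_succ _ _ _ (famN2 k),
      qPoch_succ _ _ _ (famN3 k), qPoch_succ _ _ _ (famD1 k), qPoch_succ _ _ _ (famD2 k),
      qPoch_succ _ _ _ (famD3 k), zpow_add_one₀ hw, hRatdef]
    simp only [hQdef, div_eq_mul_inv, mul_inv]
    ring
  -- Q^m -> 0
  have hQlim : Tendsto (fun m : ℕ => Q ^ (m:ℤ)) atTop (𝓝 0) := by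
    have h1 : ‖Q‖ < 1 := by
      rw [hQdef, Complex.norm_real, Real.norm_eq_abs, abs_of_pos hq0]; exact hq1
    have := tendsto_pow_atTop_nhds_zero_of_norm_lt_one h1
    simpa [zpow_natCast] using this
  have hfac : ∀ a : ℂ, Tendsto (fun m : ℕ => 1 - a * Q ^ (m:ℤ)) atTop (𝓝 1) := by
    intro a
    have h2 := (tendsto_const_nhds (x := (1:ℂ))).sub (hQlim.const_mul a)
    simpa using h2
  have hRatlim : Tendsto (fun m : ℕ => Rat (m:ℤ) * (s * z)) atTop (𝓝 (s * z)) := by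
    have hnum := ((hfac (g*Q)).mul (hfac (b * Q ^ n))).mul (hfac (g ^ 2 * Q ^ (-n) / c))
    have hden := ((hfac g).mul (hfac (g ^ 2 * Q ^ (1 - n) / b))).mul (hfac (c * Q ^ (1 + n)))
    have h3 := (hnum.div hden (by norm_num)).mul (tendsto_const_nhds (x := s * z))
    simpa [hRatdef] using h3
  have hposratio : Tendsto (fun m : ℕ => ‖T ((m:ℤ) + 1)‖ / ‖T (m:ℤ)‖) atTop
      (𝓝 (Real.sqrt q)) := by
    have he : (fun m : ℕ => ‖T ((m:ℤ) + 1)‖ / ‖T (m:ℤ)‖)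
        = fun m : ℕ => ‖Rat (m:ℤ) * (s * z)‖ := by
      funext m
      rw [hTsucc, norm_mul, mul_comm, mul_div_assoc,
        div_self (norm_ne_zero_iff.2 (hT0 (m:ℤ))), mul_one]
    have h4 := hRatlim.norm
    rw [hnw] at h4
    rw [he]
    exact h4
  have hsumpos : Summable fun m : ℕ => ‖T (m:ℤ)‖ := by
    apply summable_of_ratio_test_tendsto_lt_one hsqlt
    · exact Eventually.of_forall fun m => norm_ne_zero_iff.2 (hT0 _)
    · have he2 : (fun m : ℕ => ‖‖T (((m+1:ℕ)):ℤ)‖‖ / ‖‖T (m:ℤ)‖‖)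
          = fun m : ℕ => ‖T ((m:ℤ) + 1)‖ / ‖T (m:ℤ)‖ := by
        funext m
        rw [Real.norm_eq_abs, Real.norm_eq_abs, abs_norm, abs_norm]
        norm_num
      exact he2 ▸ hposratio
  -- negative side
  have hfac2 : ∀ (a : ℂ) (j : ℤ), 1 - a * Q ^ (-j) = Q ^ (-j) * (Q ^ j - a) := by
    intro a j
    rw [mul_sub, ← zpow_add₀ hQ, show -j + j = 0 by ring, zpow_zero]; ring
  have hsub0 : ∀ (a : ℂ), (∀ i : ℤ, 1 - a * Q ^ i ≠ 0) → ∀ j : ℤ, Q ^ j - a ≠ 0 := by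
    intro a hafam j h0
    have h6 := hafam (-j)
    rw [hfac2 a j, h0, mul_zero] at h6; exact h6 rfl
  have hRatneg : ∀ m : ℕ, Rat (-((m:ℤ)+1)) =
      (Q^((m:ℤ)+1) - g*Q) * (Q^((m:ℤ)+1) - b*Q^n) * (Q^((m:ℤ)+1) - g^2*Q^(-n)/c) /
        ((Q^((m:ℤ)+1) - g) * (Q^((m:ℤ)+1) - g^2*Q^(1-n)/b) * (Q^((m:ℤ)+1) - c*Q^(1+n))) := by
    intro m
    set j : ℤ := (m:ℤ)+1 with hjdef
    have hRat : Rat (-j) = (1 - g*Q*Q^(-j)) * (1 - b*Q^n*Q^(-j)) * (1 - g^2*Q^(-n)/c*Q^(-j)) /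
        ((1 - g*Q^(-j)) * (1 - g^2*Q^(1-n)/b*Q^(-j)) * (1 - c*Q^(1+n)*Q^(-j))) := by
      simp only [hRatdef]
    rw [hRat, hfac2 (g*Q) j, hfac2 (b*Q^n) j, hfac2 (g^2*Q^(-n)/c) j, hfac2 g j,
      hfac2 (g^2*Q^(1-n)/b) j, hfac2 (c*Q^(1+n)) j]
    have hu : Q ^ (-j) ≠ 0 := zpow_ne_zero _ hQ
    rw [div_eq_div_iff
      (mul_ne_zero (mul_ne_zero (mul_ne_zero hu (hsub0 g famD1 j))
          (mul_ne_zero hu (hsub0 _ famD2 j))) (mul_ne_zero hu (hsub0 _ famD3 j)))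
      (mul_ne_zero (mul_ne_zero (hsub0 g famD1 j) (hsub0 _ famD2 j)) (hsub0 _ famD3 j))]
    ring
  have hQlim1 : Tendsto (fun m : ℕ => Q^((m:ℤ)+1)) atTop (𝓝 0) := by
    have h7 : ∀ m : ℕ, Q^((m:ℤ)+1) = Q^(m:ℤ) * Q := fun m => zpow_add_one₀ hQ _
    simp only [h7]
    simpa using hQlim.mul_const Q
  have hfac3 : ∀ a : ℂ, Tendsto (fun m : ℕ => Q^((m:ℤ)+1) - a) atTop (𝓝 (-a)) :=
    fun a => by simpa using hQlim1.sub (tendsto_const_nhds (x := a))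
  set L0 : ℂ := ((-(g*Q)) * (-(b*Q^n)) * (-(g^2*Q^(-n)/c))) /
      ((-g) * (-(g^2*Q^(1-n)/b)) * (-(c*Q^(1+n)))) with hL0def
  have hg2 : g^2 ≠ 0 := pow_ne_zero 2 hg
  have hden0 : (-g) * (-(g^2*Q^(1-n)/b)) * (-(c*Q^(1+n))) ≠ 0 := by
    refine mul_ne_zero (mul_ne_zero (neg_ne_zero.2 hg) (neg_ne_zero.2 ?_)) (neg_ne_zero.2 ?_)
    · exact div_ne_zero (mul_ne_zero hg2 (zpow_ne_zero _ hQ)) hb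
    · exact mul_ne_zero hc (zpow_ne_zero _ hQ)
  have hnum0 : (-(g*Q)) * (-(b*Q^n)) * (-(g^2*Q^(-n)/c)) ≠ 0 := by
    refine mul_ne_zero (mul_ne_zero (neg_ne_zero.2 (mul_ne_zero hg hQ)) (neg_ne_zero.2 ?_)) (neg_ne_zero.2 ?_)
    · exact mul_ne_zero hb (zpow_ne_zero _ hQ)
    · exact div_ne_zero (mul_ne_zero hg2 (zpow_ne_zero _ hQ)) hc
  have hL00 : L0 ≠ 0 := div_ne_zero hnum0 hden0
  have hL0lim : Tendsto (fun m : ℕ => Rat (-((m:ℤ)+1))) atTop (𝓝 L0) := by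
    have h8 : (fun m : ℕ => Rat (-((m:ℤ)+1))) = fun m : ℕ =>
        (Q^((m:ℤ)+1) - g*Q) * (Q^((m:ℤ)+1) - b*Q^n) * (Q^((m:ℤ)+1) - g^2*Q^(-n)/c) /
          ((Q^((m:ℤ)+1) - g) * (Q^((m:ℤ)+1) - g^2*Q^(1-n)/b) * (Q^((m:ℤ)+1) - c*Q^(1+n))) :=
      funext hRatneg
    rw [h8, hL0def]
    exact (((hfac3 (g*Q)).mul (hfac3 (b*Q^n))).mul (hfac3 (g^2*Q^(-n)/c))).div
      ((((hfac3 g).mul (hfac3 (g^2*Q^(1-n)/b))).mul (hfac3 (c*Q^(1+n))))) hden0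
  -- norm of limit
  have hL0norm : ‖L0‖ = 1/q := by
    have hqn : (0:ℝ) < q ^ (n:ℤ) := zpow_pos hq0 n
    have hnb : ‖b‖ ≠ 0 := norm_ne_zero_iff.2 hb
    have hcb' : ‖c‖ = ‖b‖ := by
      rw [hcb]
    rw [hL0def]
    rw [norm_div, norm_mul, norm_mul, norm_mul, norm_mul, norm_neg, norm_neg, norm_neg,
      norm_neg, norm_neg, norm_neg, norm_mul, norm_mul, norm_mul, norm_div, norm_mul,
      norm_div, norm_mul, norm_zpow, norm_zpow, norm_zpow, norm_zpow, norm_pow]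
    rw [hQdef, Complex.norm_real, Real.norm_eq_abs, abs_of_pos hq0, hcb']
    rw [zpow_neg, show (1:ℤ) - n = 1 + -n by ring, show (1:ℤ) + n = 1 + n by ring,
      zpow_add₀ (ne_of_gt hq0), zpow_add₀ (ne_of_gt hq0), zpow_neg, zpow_one]
    have hng : ‖g‖ ≠ 0 := norm_ne_zero_iff.2 hg
    have hqn' : (q:ℝ) ^ (n:ℤ) ≠ 0 := ne_of_gt hqn
    have hden : ‖g‖ * (‖g‖^2 * (q * ((q:ℝ)^(n:ℤ))⁻¹)/‖b‖) * (‖b‖ * (q * (q:ℝ)^(n:ℤ))) ≠ 0 := by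
      refine mul_ne_zero (mul_ne_zero hng ?_) ?_
      · exact div_ne_zero (mul_ne_zero (pow_ne_zero 2 hng)
          (mul_ne_zero (ne_of_gt hq0) (inv_ne_zero hqn'))) hnb
      · exact mul_ne_zero hnb (mul_ne_zero (ne_of_gt hq0) hqn')
    rw [div_eq_div_iff hden (ne_of_gt hq0)]
    ring
  have hwn0 : ‖L0 * (s*z)‖ ≠ 0 := norm_ne_zero_iff.2 (mul_ne_zero hL00 hw)
  have hL0norm2 : ‖L0 * (s*z)‖⁻¹ = Real.sqrt q := by
    rw [norm_mul, hnw, hL0norm]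
    rw [show (1/q * Real.sqrt q)⁻¹ = q / Real.sqrt q by
      field_simp]
    exact Real.div_sqrt
  have hnegratio : Tendsto (fun m : ℕ => ‖T (-((m:ℤ)+1))‖ / ‖T (-(m:ℤ))‖) atTop
      (𝓝 (Real.sqrt q)) := by
    have he3 : (fun m : ℕ => ‖T (-((m:ℤ)+1))‖ / ‖T (-(m:ℤ))‖)
        = fun m : ℕ => ‖Rat (-((m:ℤ)+1)) * (s*z)‖⁻¹ := by
      funext m
      have h5 := hTsucc (-((m:ℤ)+1))
      rw [show -((m:ℤ)+1) + 1 = -(m:ℤ) by ring] at h5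
      rw [h5, norm_mul, div_mul_cancel_left₀ (norm_ne_zero_iff.2 (hT0 _))]
    rw [he3]
    have h9 := ((hL0lim.mul_const (s*z)).norm).inv₀ hwn0
    rw [hL0norm2] at h9
    exact h9
  have hsumneg : Summable fun m : ℕ => ‖T (-(m:ℤ))‖ := by
    apply summable_of_ratio_test_tendsto_lt_one hsqlt
    · exact Eventually.of_forall fun m => norm_ne_zero_iff.2 (hT0 _)
    · have he5 : (fun m : ℕ => ‖‖T (-((m+1:ℕ):ℤ))‖‖ / ‖‖T (-(m:ℤ))‖‖)
          = fun m : ℕ => ‖T (-((m:ℤ)+1))‖ / ‖T (-(m:ℤ))‖ := by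
        funext m
        rw [Real.norm_eq_abs, Real.norm_eq_abs, abs_norm, abs_norm]
        norm_num
      exact he5 ▸ hnegratio
  rw [summable_int_iff_summable_nat_and_neg]
  exact ⟨hsumpos, hsumneg⟩

end Aux

/-- Representation of `F_n` as a multiple of a well-poised bilateral `₃ψ₃` series,
the series converging absolutely on the unit circle. -/
theorem Fn_eq_3psi3 (q : ℝ) (hq0 : 0 < q) (hq1 : q < 1)
    (g b c : ℂ) (hg : g ≠ 0) (hgre : g.re = 0) (hb : b ≠ 0) (hc : c = (starRingEnd ℂ) b)
    (h1g : 1 - g ≠ 0)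
    (hd1 : ∀ m : ℤ, qPoch (c * (q : ℂ)) (q : ℂ) m ≠ 0)
    (hd2 : ∀ m : ℤ, qPoch (g ^ 2 * (q : ℂ) / b) (q : ℂ) m ≠ 0)
    (hd3 : ∀ k : ℤ, qPoch g (q : ℂ) k ≠ 0)
    (hd4 : ∀ n k : ℤ, qPoch (g ^ 2 * (q : ℂ) ^ (1 - n) / b) (q : ℂ) k ≠ 0)
    (hd5 : ∀ n k : ℤ, qPoch (c * (q : ℂ) ^ (1 + n)) (q : ℂ) k ≠ 0)
    (hd6 : ∀ n : ℤ, qPoch (c * (q : ℂ) / g ^ 2) (q : ℂ) n ≠ 0) :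
    ∀ n : ℤ, ∀ z : ℂ, ‖z‖ = 1 →
      (Summable fun k : ℤ => ‖psi3Term q g b c n k z‖) ∧
      Fq q g b c n z =
        qPoch b (q : ℂ) n * qPoch (b / g ^ 2) (q : ℂ) n /
            (qPoch (c * (q : ℂ)) (q : ℂ) n * qPoch (c * (q : ℂ) / g ^ 2) (q : ℂ) n) *
          (c * (q : ℂ) / b) ^ n * ∑' k : ℤ, psi3Term q g b c n k z := by
  intro n z hz1
  have hQ : (q:ℂ) ≠ 0 := by
    simp only [ne_eq, Complex.ofReal_eq_zero]; exact ne_of_gt hq0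
  have hs : ((Real.sqrt q : ℝ) : ℂ) ≠ 0 := by
    simp only [ne_eq, Complex.ofReal_eq_zero]
    exact ne_of_gt (Real.sqrt_pos.2 hq0)
  have hz : z ≠ 0 := by intro h0; rw [h0] at hz1; simp at hz1
  have hc0 : c ≠ 0 := by rw [hc]; exact star_ne_zero.2 hb
  have hgfam : ∀ j : ℤ, 1 - g * (q:ℂ) ^ j ≠ 0 := factor_ne_zero hd3
  have hcQfam : ∀ j : ℤ, 1 - c * (q:ℂ) * (q:ℂ) ^ j ≠ 0 := factor_ne_zero hd1
  have hgbQfam : ∀ j : ℤ, 1 - g ^ 2 * (q:ℂ) / b * (q:ℂ) ^ j ≠ 0 := factor_ne_zero hd2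
  have hcgQfam : ∀ j : ℤ, 1 - c * (q:ℂ) / g ^ 2 * (q:ℂ) ^ j ≠ 0 := factor_ne_zero hd6
  have hcfam : ∀ j : ℤ, 1 - c * (q:ℂ) ^ j ≠ 0 :=
    fam_param hQ hcQfam (-1) (by
      rw [zpow_neg_one]; exact (mul_inv_cancel_right₀ hQ c).symm)
  have hgb0fam : ∀ j : ℤ, 1 - g ^ 2 / b * (q:ℂ) ^ j ≠ 0 :=
    fam_param hQ hgbQfam (-1) (by
      rw [zpow_neg_one]; field_simp)
  have hcg0fam : ∀ j : ℤ, 1 - c / g ^ 2 * (q:ℂ) ^ j ≠ 0 :=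
    fam_param hQ hcgQfam (-1) (by
      rw [zpow_neg_one]; field_simp)
  have hconj : ∀ x : ℂ, ∀ j : ℤ, (1 - x * (q:ℂ) ^ j ≠ 0) →
      1 - (starRingEnd ℂ) x * (q:ℂ) ^ j ≠ 0 := by
    intro x j hxj h0
    apply hxj
    have h1 := congrArg (starRingEnd ℂ) h0
    simpa [map_zpow₀, Complex.conj_ofReal] using h1
  have hconjg : (starRingEnd ℂ) g = -g := by
    apply Complex.ext <;> simp [hgre]
  have hconjg2 : (starRingEnd ℂ) (g ^ 2) = g ^ 2 := by rw [map_pow, hconjg]; ring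
  have hbfam : ∀ j : ℤ, 1 - b * (q:ℂ) ^ j ≠ 0 := fun j => by
    have h1 := hconj c j (hcfam j)
    rwa [hc, Complex.conj_conj] at h1
  have hgcfam : ∀ j : ℤ, 1 - g ^ 2 / c * (q:ℂ) ^ j ≠ 0 := fun j => by
    have h1 := hconj (g ^ 2 / b) j (hgb0fam j)
    rwa [map_div₀, hconjg2, ← hc] at h1
  have hbgfam : ∀ j : ℤ, 1 - b / g ^ 2 * (q:ℂ) ^ j ≠ 0 := fun j => by
    have h1 := hconj (c / g ^ 2) j (hcg0fam j)
    rwa [map_div₀, hconjg2, hc, Complex.conj_conj] at h1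
  constructor
  · exact summ q hq0 hq1 g b c z hg hb hc0 hgfam hbfam hcfam hgcfam hgb0fam hz1
      (by rw [hc]; exact Complex.norm_conj b) n
  · have ht := fun k : ℤ => termwise q g b c z hQ hs hg h1g hb hc0 hz hgfam hbfam
      hcfam hgcfam hgb0fam hbgfam hcgQfam n k
    simp only [Fq]
    rw [tsum_congr ht, tsum_mul_left]
end
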